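/- arXiv:2405.11132 — 4 statements merged into one kernel-verified Lean document; each statement's English description precedes it below -/
import Mathlib

section
/- Let n = ℓ₁⋯ℓ_k be a square-free positive integer with n ≡ 3 (mod 4), where ℓ₁,…,ℓ_k are distinct odd primes. Let A = (a_{ij}) ∈ M_{k×k}(𝔽₂) be defined by a_{ij} = [ℓ_j/ℓ_i] (the additive Legendre symbol, equal to 0 if ℓ_j is a quadratic residue mod ℓ_i and 1 otherwise) for i ≠ j, and a_{ii} = Σ_{j≠i} a_{ij}. Let z_{-1} = ([-1/ℓ₁],…,[-1/ℓ_k])ᵀ ∈ 𝔽₂^k and D_{-1} = diag(z_{-1}). Then rank(A + D_{-1}) = rank(A) + 1. -/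
open Matrix

/-- The additive Legendre symbol `[d/p] ∈ 𝔽₂`: `0` iff `d` is a square mod `p`. -/
noncomputable def addLeg (d : ℤ) (p : ℕ) : ZMod 2 :=
  letI := Classical.dec (IsSquare ((d : ZMod p)))
  if IsSquare ((d : ZMod p)) then 0 else 1

/-- The Rédei-type matrix `A = (a_{ij})` associated to `n = ℓ₁⋯ℓ_k`:
`a_{ij} = [ℓ_j/ℓ_i]` for `i ≠ j` and `a_{ii} = Σ_{j≠i} a_{ij}`. -/
noncomputable def matA (k : ℕ) (ℓ : Fin k → ℕ) : Matrix (Fin k) (Fin k) (ZMod 2) :=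
  Matrix.of fun i j =>
    if i = j then ∑ j' ∈ Finset.univ.erase i, addLeg (ℓ j') (ℓ i)
    else addLeg (ℓ j) (ℓ i)

/-- The vector `z_d = ([d/ℓ₁],…,[d/ℓ_k])ᵀ ∈ 𝔽₂^k`. -/
noncomputable def vecZ (k : ℕ) (ℓ : Fin k → ℕ) (d : ℤ) : Fin k → ZMod 2 :=
  fun i => addLeg d (ℓ i)

lemma addLeg_def (d : ℤ) (p : ℕ) [Decidable (IsSquare ((d : ZMod p)))] :
    addLeg d p = if IsSquare ((d : ZMod p)) then 0 else 1 := by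
  unfold addLeg
  split_ifs with h h' h' <;> simp_all

lemma addLeg_neg_one {p : ℕ} (hp : p.Prime) :
    addLeg (-1) p = if p % 4 = 3 then 1 else 0 := by
  classical
  haveI : Fact p.Prime := ⟨hp⟩
  rw [addLeg_def]
  push_cast
  have h := ZMod.exists_sq_eq_neg_one_iff (p := p)
  split_ifs with h1 h2 h2 <;> simp_all

lemma addLeg_reciprocity {p q : ℕ} (hp : p.Prime) (hq : q.Prime)
    (hp2 : p ≠ 2) (hq2 : q ≠ 2) (hpq : p ≠ q) :
    addLeg q p + addLeg p q = addLeg (-1) p * addLeg (-1) q := by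
  classical
  haveI : Fact p.Prime := ⟨hp⟩
  haveI : Fact q.Prime := ⟨hq⟩
  have hpodd : p % 2 = 1 := Nat.odd_iff.mp (hp.odd_of_ne_two hp2)
  have hqodd : q % 2 = 1 := Nat.odd_iff.mp (hq.odd_of_ne_two hq2)
  have hp4 : p % 4 = 1 ∨ p % 4 = 3 := by omega
  have hq4 : q % 4 = 1 ∨ q % 4 = 3 := by omega
  rw [addLeg_def, addLeg_def, addLeg_neg_one hp, addLeg_neg_one hq]
  push_cast
  rcases hp4 with hp4 | hp4 <;> rcases hq4 with hq4 | hq4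
  · have h := ZMod.exists_sq_eq_prime_iff_of_mod_four_eq_one (p := p) (q := q) hp4 hq2
    simp only [hp4, hq4]
    split_ifs with h1 h2 h2 <;> first | decide | simp_all | (simp_all; decide)
  · have h := ZMod.exists_sq_eq_prime_iff_of_mod_four_eq_one (p := p) (q := q) hp4 hq2
    simp only [hp4, hq4]
    split_ifs with h1 h2 h2 <;> first | decide | simp_all | (simp_all; decide)
  · have h := ZMod.exists_sq_eq_prime_iff_of_mod_four_eq_one (p := q) (q := p) hq4 hp2
    simp only [hp4, hq4]
    split_ifs with h1 h2 h2 <;> first | decide | simp_all | (simp_all; decide)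
  · have h := ZMod.exists_sq_eq_prime_iff_of_mod_four_eq_three (p := p) (q := q) hp4 hq4 hpq
    simp only [hp4, hq4]
    split_ifs with h1 h2 h2 <;> first | decide | simp_all | (simp_all; decide)

lemma prod_mod4 {ι : Type*} (s : Finset ι) (f : ι → ℕ) (h : ∀ i ∈ s, f i % 2 = 1) :
    (∏ i ∈ s, f i) % 2 = 1 ∧
    (if (∏ i ∈ s, f i) % 4 = 3 then (1 : ZMod 2) else 0)
      = ∑ i ∈ s, (if f i % 4 = 3 then (1 : ZMod 2) else 0) := by
  classical
  induction s using Finset.cons_induction with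
  | empty => simp
  | cons a s ha ih =>
    have hodd : ∀ i ∈ s, f i % 2 = 1 := fun i hi => h i (Finset.mem_cons_of_mem hi)
    obtain ⟨h1, h2⟩ := ih hodd
    have hfa := h a (Finset.mem_cons_self a s)
    rw [Finset.prod_cons, Finset.sum_cons]
    refine ⟨by rw [Nat.mul_mod, hfa, h1], ?_⟩
    rw [← h2]
    set P := ∏ i ∈ s, f i with hP
    have ha4 : f a % 4 = 1 ∨ f a % 4 = 3 := by omega
    have hP4 : P % 4 = 1 ∨ P % 4 = 3 := by omega
    rw [Nat.mul_mod]
    rcases ha4 with h' | h' <;> rcases hP4 with h'' | h'' <;> norm_num [h', h''] <;> decide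


/-- For `n = ℓ₁⋯ℓ_k` square-free positive with `n ≡ 3 (mod 4)`,
`rank(A + D_{-1}) = rank(A) + 1` over `𝔽₂`. -/
theorem rank_A_add_D_neg_one (k : ℕ) (ℓ : Fin k → ℕ) (n : ℕ)
    (hprime : ∀ i, (ℓ i).Prime) (hodd : ∀ i, Odd (ℓ i))
    (hinj : Function.Injective ℓ)
    (hn : n = ∏ i, ℓ i) (hsf : Squarefree n) (hmod : n % 4 = 3) :
    (matA k ℓ + Matrix.diagonal (vecZ k ℓ (-1))).rank = (matA k ℓ).rank + 1 := by
  classical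
  haveI : Fact (Nat.Prime 2) := ⟨Nat.prime_two⟩
  set z : Fin k → ZMod 2 := vecZ k ℓ (-1) with hzdef
  set A : Matrix (Fin k) (Fin k) (ZMod 2) := matA k ℓ with hAdef
  set B : Matrix (Fin k) (Fin k) (ZMod 2) := A + Matrix.diagonal z with hBdef
  -- basic facts about ZMod 2
  have two_cancel : ∀ x y w : ZMod 2, x + y = w → x = y + w := fun x y w h => by
    rw [← h, add_comm x y, ← add_assoc, CharTwo.add_self_eq_zero, zero_add]
  have sq_self : ∀ x : ZMod 2, x * x = x := fun x => by fin_cases x <;> rfl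
  have add_self : ∀ x : ZMod 2, x + x = 0 := fun x => CharTwo.add_self_eq_zero x
  have hne2 : ∀ i, ℓ i ≠ 2 := by
    intro i h
    have := hodd i
    rw [h] at this
    exact (Nat.not_odd_iff_even.mpr even_two) this
  have hlodd : ∀ i, ℓ i % 2 = 1 := fun i => Nat.odd_iff.mp (hodd i)
  have hzi : ∀ i, z i = if ℓ i % 4 = 3 then 1 else 0 := fun i => addLeg_neg_one (hprime i)
  -- the sum of the entries of z is 1
  have hsumz : ∑ i, z i = 1 := by
    have hp := (prod_mod4 Finset.univ ℓ (fun i _ => hlodd i)).2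
    rw [← hn, hmod] at hp
    simp only [if_pos rfl] at hp
    calc ∑ i, z i = ∑ i, (if ℓ i % 4 = 3 then (1 : ZMod 2) else 0) :=
          Finset.sum_congr rfl (fun i _ => hzi i)
      _ = 1 := hp.symm
  -- the key matrix relation B i j = A j i + z i * z j
  have hB : ∀ i j, B i j = A j i + z i * z j := by
    intro i j
    by_cases h : i = j
    · subst h
      have : B i i = A i i + z i := by
        simp [hBdef, Matrix.add_apply, Matrix.diagonal_apply_eq]
      rw [this, sq_self]
    · have hji : ¬ j = i := fun e => h e.symm
      have hBij : B i j = A i j := by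
        simp [hBdef, Matrix.add_apply, Matrix.diagonal_apply_ne _ h]
      have hij : A i j = addLeg (ℓ j) (ℓ i) := by simp [hAdef, matA, h]
      have hji' : A j i = addLeg (ℓ i) (ℓ j) := by simp [hAdef, matA, hji]
      have hrec := addLeg_reciprocity (hprime i) (hprime j) (hne2 i) (hne2 j)
        (fun e => h (hinj e))
      have hz1 : z i = addLeg (-1) (ℓ i) := rfl
      have hz2 : z j = addLeg (-1) (ℓ j) := rfl
      rw [hBij, hij, hji', hz1, hz2]
      exact two_cancel _ _ _ hrec
  -- row sums of A vanish
  have hrow : ∀ i, ∑ j, A i j = 0 := by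
    intro i
    rw [← Finset.add_sum_erase Finset.univ _ (Finset.mem_univ i)]
    have h1 : ∀ j ∈ Finset.univ.erase i, A i j = addLeg (ℓ j) (ℓ i) := by
      intro j hj
      have : ¬ i = j := fun e => (Finset.ne_of_mem_erase hj) e.symm
      simp [hAdef, matA, this]
    have h2 : A i i = ∑ j' ∈ Finset.univ.erase i, addLeg (ℓ j') (ℓ i) := by
      simp [hAdef, matA]
    rw [Finset.sum_congr rfl h1, h2]
    exact add_self _
  -- column sums of A vanish
  have hcol : ∀ j, ∑ i, A i j = 0 := by
    intro j
    have hAij : ∀ i, A i j = B i j + Matrix.diagonal z i j := by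
      intro i
      have hb : B i j = A i j + Matrix.diagonal z i j := by
        simp [hBdef, Matrix.add_apply]
      rw [hb, add_assoc, add_self, add_zero]
    have step : ∀ i, A i j = A j i + z i * z j + Matrix.diagonal z i j := by
      intro i; rw [hAij i, hB i j]
    calc ∑ i, A i j = ∑ i, (A j i + z i * z j + Matrix.diagonal z i j) :=
          Finset.sum_congr rfl (fun i _ => step i)
      _ = (∑ i, A j i) + (∑ i, z i) * z j + (∑ i, Matrix.diagonal z i j) := by
          rw [Finset.sum_add_distrib, Finset.sum_add_distrib, Finset.sum_mul]
      _ = 0 := by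
          have hd : (∑ i, Matrix.diagonal z i j) = z j := by
            simp [Matrix.diagonal_apply]
          rw [hrow j, hsumz, hd, one_mul, zero_add]
          exact add_self _
  -- the linear functional x ↦ ⟨z, x⟩
  let f : (Fin k → ZMod 2) →ₗ[ZMod 2] ZMod 2 :=
    { toFun := fun x => ∑ i, z i * x i
      map_add' := fun x y => by
        simp [mul_add, Finset.sum_add_distrib]
      map_smul' := fun c x => by
        simp [Finset.mul_sum, mul_left_comm] }
  -- B.mulVec in terms of Aᵀ.mulVec and f
  have hBmul : ∀ x, B.mulVec x = Aᵀ.mulVec x + (f x) • z := by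
    intro x
    funext i
    have : ∑ j, B i j * x j = (∑ j, A j i * x j) + (∑ j, z j * x j) * z i := by
      calc ∑ j, B i j * x j = ∑ j, (A j i * x j + z i * (z j * x j)) :=
            Finset.sum_congr rfl (fun j _ => by rw [hB i j]; ring)
        _ = (∑ j, A j i * x j) + z i * ∑ j, (z j * x j) := by
            rw [Finset.sum_add_distrib, Finset.mul_sum]
        _ = (∑ j, A j i * x j) + (∑ j, z j * x j) * z i := by ring
    have hfapp : f x = ∑ j, z j * x j := rfl
    simp only [Matrix.mulVec, dotProduct, Matrix.transpose_apply, Pi.add_apply,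
      Pi.smul_apply, smul_eq_mul, hfapp]
    rw [this]
  -- the sum of the entries of Aᵀ.mulVec x always vanishes
  have hsumAT : ∀ x, ∑ i, Aᵀ.mulVec x i = 0 := by
    intro x
    simp only [Matrix.mulVec, dotProduct, Matrix.transpose_apply]
    rw [Finset.sum_comm]
    refine Finset.sum_eq_zero fun j _ => ?_
    rw [← Finset.sum_mul, hrow j, zero_mul]
  -- kernel of B equals ker Aᵀ ∩ ker f
  have hker : LinearMap.ker B.mulVecLin = LinearMap.ker (Aᵀ).mulVecLin ⊓ LinearMap.ker f := by
    ext x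
    simp only [LinearMap.mem_ker, Submodule.mem_inf, Matrix.mulVecLin_apply]
    constructor
    · intro hx
      have hfx : f x = 0 := by
        have h1 : ∑ i, B.mulVec x i = f x := by
          rw [hBmul x]
          simp only [Pi.add_apply, Pi.smul_apply, smul_eq_mul]
          rw [Finset.sum_add_distrib, hsumAT x, ← Finset.mul_sum, hsumz, mul_one, zero_add]
        rw [hx] at h1
        simpa using h1.symm
      refine ⟨?_, hfx⟩
      have := hBmul x
      rw [hx, hfx] at this
      simpa using this.symm
    · rintro ⟨h1, h2⟩
      rw [hBmul x, h1, h2]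
      simp
  -- the vector e of all ones
  have heK : Aᵀ.mulVec (fun _ => (1 : ZMod 2)) = 0 := by
    funext i
    simp only [Matrix.mulVec, dotProduct, Matrix.transpose_apply, mul_one, Pi.zero_apply]
    exact hcol i
  have heK' : (fun _ => (1 : ZMod 2)) ∈ LinearMap.ker (Aᵀ).mulVecLin :=
    LinearMap.mem_ker.mpr (by rw [Matrix.mulVecLin_apply]; exact heK)
  have hfe : f (fun _ => (1 : ZMod 2)) = 1 := by
    simp only [LinearMap.coe_mk, AddHom.coe_mk, mul_one, f]
    exact hsumz
  set K := LinearMap.ker (Aᵀ).mulVecLin with hK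
  let f' : K →ₗ[ZMod 2] ZMod 2 := f.domRestrict K
  have hrange : LinearMap.range f' = ⊤ := by
    rw [LinearMap.range_eq_top]
    intro c
    refine ⟨c • ⟨(fun _ => (1 : ZMod 2)), heK'⟩, ?_⟩
    have h1 : f' (c • ⟨(fun _ => (1 : ZMod 2)), heK'⟩) = c • f' ⟨(fun _ => (1 : ZMod 2)), heK'⟩ :=
      f'.map_smul c _
    have h2 : f' ⟨(fun _ => (1 : ZMod 2)), heK'⟩ = 1 := hfe
    rw [h1, h2, smul_eq_mul, mul_one]
  have h3 : 1 + Module.finrank (ZMod 2) (LinearMap.ker f') = Module.finrank (ZMod 2) K := by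
    have := LinearMap.finrank_range_add_finrank_ker f'
    rw [hrange, finrank_top, Module.finrank_self] at this
    exact this
  have hmap : (LinearMap.ker f').map K.subtype = K ⊓ LinearMap.ker f := by
    ext x
    simp only [Submodule.mem_map, LinearMap.mem_ker, Submodule.mem_inf]
    constructor
    · rintro ⟨⟨y, hy⟩, hfy, rfl⟩
      exact ⟨hy, hfy⟩
    · rintro ⟨hx, hfx⟩
      exact ⟨⟨x, hx⟩, hfx, rfl⟩
  have h4 : Module.finrank (ZMod 2) (LinearMap.ker B.mulVecLin)
      = Module.finrank (ZMod 2) (LinearMap.ker f') := by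
    rw [hker, ← hmap, Submodule.finrank_map_subtype_eq]
  have h5 : B.rank + Module.finrank (ZMod 2) (LinearMap.ker B.mulVecLin) = k := by
    have := LinearMap.finrank_range_add_finrank_ker B.mulVecLin
    rwa [Module.finrank_pi, Fintype.card_fin] at this
  have h6 : Aᵀ.rank + Module.finrank (ZMod 2) K = k := by
    have := LinearMap.finrank_range_add_finrank_ker (Aᵀ).mulVecLin
    rwa [Module.finrank_pi, Fintype.card_fin] at this
  have h7 : (Aᵀ).rank = A.rank := Matrix.rank_transpose A
  omega
end

section
/- Let A ∈ M_{k×k}(𝔽₂) and z_{-1} ∈ 𝔽₂^k satisfy: A + Aᵀ = z_{-1}z_{-1}ᵀ + diag(z_{-1}), every row of A sums to 0, every column of A sums to 0, and the entries of z_{-1} sum to 1. Then the rank of the (k+1)×k block matrix formed by stacking A + diag(z_{-1}) on top of the row vector z_{-1}ᵀ equals rank(A) + 1. -/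
open Matrix

/-- Rédei-matrix rank identity: if `A ∈ M_{k×k}(𝔽₂)` and `z ∈ 𝔽₂^k` satisfy
`A + Aᵀ = zzᵀ + diag(z)`, all rows and columns of `A` sum to `0`, and the entries of
`z` sum to `1`, then the rank of the `(k+1)×k` matrix obtained by stacking
`A + diag(z)` on top of `zᵀ` equals `rank(A) + 1`. -/
theorem rank_stack_eq_rank_add_one (k : ℕ)
    (A : Matrix (Fin k) (Fin k) (ZMod 2)) (z : Fin k → ZMod 2)
    (hsym : A + Aᵀ = Matrix.vecMulVec z z + Matrix.diagonal z)
    (hrow : ∀ i, ∑ j, A i j = 0) (hcol : ∀ j, ∑ i, A i j = 0)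
    (hz : ∑ i, z i = 1) :
    (Matrix.fromRows (A + Matrix.diagonal z) (Matrix.replicateRow Unit z)).rank
      = A.rank + 1 := by
  classical
  -- transpose of the stacked matrix
  rw [← Matrix.rank_transpose (Matrix.fromRows (A + Matrix.diagonal z) (Matrix.replicateRow Unit z))]
  rw [Matrix.transpose_fromRows, Matrix.transpose_replicateRow]
  -- (A + diag z)ᵀ = A + zzᵀ
  have hBT : (A + Matrix.diagonal z)ᵀ = A + Matrix.vecMulVec z z := by
    have h2 : Matrix.diagonal z + Matrix.diagonal z = 0 := by
      ext i j
      by_cases h : i = j <;> simp [Matrix.diagonal, h, CharTwo.add_self_eq_zero]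
    have : Aᵀ = A + Matrix.vecMulVec z z + Matrix.diagonal z := by
      have := hsym
      have hA2 : A + A = 0 := by
        ext i j; simp [CharTwo.add_self_eq_zero]
      calc Aᵀ = A + (A + Aᵀ) := by rw [← add_assoc, hA2, zero_add]
        _ = A + (Matrix.vecMulVec z z + Matrix.diagonal z) := by rw [hsym]
        _ = A + Matrix.vecMulVec z z + Matrix.diagonal z := by rw [add_assoc]
    rw [Matrix.transpose_add, Matrix.diagonal_transpose, this, add_assoc, add_assoc, h2,
      add_zero]
  rw [hBT]
  -- z is not in the column space of A, and z ≠ 0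
  have hzne : z ≠ 0 := by
    intro h; rw [h] at hz; simp at hz
  have hznotin : z ∉ LinearMap.range A.mulVecLin := by
    rintro ⟨x, hx⟩
    have : ∑ i, z i = 0 := by
      rw [← hx]
      simp only [Matrix.mulVecLin_apply, Matrix.mulVec, dotProduct]
      rw [Finset.sum_comm]
      simp only [← Finset.sum_mul, hcol, zero_mul, Finset.sum_const_zero]
    rw [hz] at this; exact one_ne_zero this
  -- range of the combined matrix
  set W := LinearMap.range A.mulVecLin with hW
  have hrange : LinearMap.range (Matrix.fromCols (A + Matrix.vecMulVec z z)
      (Matrix.replicateCol Unit z)).mulVecLin = W ⊔ Submodule.span (ZMod 2) {z} := by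
    apply le_antisymm
    · rintro _ ⟨x, rfl⟩
      have hx : x = Sum.elim (x ∘ Sum.inl) (x ∘ Sum.inr) := by
        ext (i | i) <;> rfl
      rw [Matrix.mulVecLin_apply, hx, Matrix.fromCols_mulVec_sumElim]
      apply Submodule.add_mem
      · have : (A + Matrix.vecMulVec z z) *ᵥ (x ∘ Sum.inl)
            = A *ᵥ (x ∘ Sum.inl) + (z ⬝ᵥ (x ∘ Sum.inl)) • z := by
          rw [Matrix.add_mulVec]
          congr 1
          ext i
          simp [Matrix.mulVec, dotProduct, Matrix.vecMulVec, Finset.mul_sum,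
            mul_assoc, mul_comm, mul_left_comm]
        rw [this]
        exact Submodule.add_mem _ (Submodule.mem_sup_left ⟨_, rfl⟩)
          (Submodule.mem_sup_right (Submodule.smul_mem _ _ (Submodule.mem_span_singleton_self z)))
      · have : (Matrix.replicateCol Unit z) *ᵥ (x ∘ Sum.inr) = (x (Sum.inr ())) • z := by
          ext i; simp [Matrix.mulVec, dotProduct, Matrix.replicateCol, mul_comm]
        rw [this]
        exact Submodule.mem_sup_right (Submodule.smul_mem _ _ (Submodule.mem_span_singleton_self z))
    · rw [sup_le_iff]
      constructor
      · rintro _ ⟨x, rfl⟩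
        refine ⟨Sum.elim x (fun _ => z ⬝ᵥ x), ?_⟩
        rw [Matrix.mulVecLin_apply, Matrix.fromCols_mulVec_sumElim]
        rw [Matrix.add_mulVec]
        have h1 : Matrix.vecMulVec z z *ᵥ x = (z ⬝ᵥ x) • z := by
          ext i
          simp [Matrix.mulVec, dotProduct, Matrix.vecMulVec, Finset.mul_sum,
            mul_assoc, mul_comm, mul_left_comm]
        have h2 : (Matrix.replicateCol Unit z) *ᵥ (fun _ => z ⬝ᵥ x) = (z ⬝ᵥ x) • z := by
          ext i; simp [Matrix.mulVec, dotProduct, Matrix.replicateCol, mul_comm]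
        have hzz : (z ⬝ᵥ x) • z + (z ⬝ᵥ x) • z = 0 := by
          ext i; simp [CharTwo.add_self_eq_zero]
        rw [h1, h2, add_assoc, hzz, add_zero]
        rfl
      · rw [Submodule.span_singleton_le_iff_mem]
        refine ⟨Sum.elim 0 (fun _ => 1), ?_⟩
        rw [Matrix.mulVecLin_apply, Matrix.fromCols_mulVec_sumElim]
        have h2 : (Matrix.replicateCol Unit z) *ᵥ (fun _ => (1 : ZMod 2)) = z := by
          ext i; simp [Matrix.mulVec, dotProduct, Matrix.replicateCol]
        rw [h2, Matrix.mulVec_zero, zero_add]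
  rw [Matrix.rank, hrange]
  -- dimension count
  have hinf : W ⊓ Submodule.span (ZMod 2) {z} = ⊥ := by
    rw [eq_bot_iff]
    intro w hw
    rw [Submodule.mem_inf] at hw
    obtain ⟨hw1, hw2⟩ := hw
    rw [Submodule.mem_span_singleton] at hw2
    obtain ⟨c, rfl⟩ := hw2
    rcases eq_or_ne c 0 with rfl | hc
    · simp
    · exact absurd (by simpa [hc] using Submodule.smul_mem W c⁻¹ hw1) hznotin
  have := Submodule.finrank_sup_add_finrank_inf_eq W (Submodule.span (ZMod 2) {z})
  rw [hinf] at this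
  simp only [finrank_bot, add_zero] at this
  rw [this, finrank_span_singleton hzne]
  rfl
end

section
/- Let k ≥ 2, let B ∈ M_{k×k}(𝔽₂) be an invertible matrix all of whose columns sum to a fixed vector w ∈ 𝔽₂^k with sum of entries of w equal to 1. Let H = {z ∈ 𝔽₂^k : sum of entries of z is 0}. Then the number of pairs (z₂, z₃) ∈ H × H with z₂ᵀ B^{−1} z₃ = 0 equals 2^{k−2}(2^{k−1} − 1) + 2^{k−1}; in particular the proportion among all pairs in H × H is 1/2 + 2^{−k}. -/
open Matrix Finset

private lemma zmod2_cases (a : ZMod 2) : a = 0 ∨ a = 1 := by revert a; decide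

private lemma card_ker_eq {n : ℕ} {W : Type*} [AddCommGroup W] [Module (ZMod 2) W] [Fintype W]
    (f : (Fin n → ZMod 2) →ₗ[ZMod 2] W) (hf : Function.Surjective f)
    [DecidablePred fun z : Fin n → ZMod 2 => f z = 0] :
    Fintype.card {z : Fin n → ZMod 2 // f z = 0} =
      2 ^ (n - Module.finrank (ZMod 2) W) := by
  haveI : Fintype (LinearMap.ker f) := Fintype.ofFinite _
  have h1 := LinearMap.finrank_range_add_finrank_ker f
  have h2 : LinearMap.range f = ⊤ := LinearMap.range_eq_top.2 hf
  have h3 : Module.finrank (ZMod 2) (Fin n → ZMod 2) = n := by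
    simp [Module.finrank_pi]
  rw [h2, finrank_top, h3] at h1
  have h4 : Module.finrank (ZMod 2) (LinearMap.ker f) =
      n - Module.finrank (ZMod 2) W := by omega
  have h5 : Fintype.card (LinearMap.ker f) =
      2 ^ Module.finrank (ZMod 2) (LinearMap.ker f) := by
    have := Module.card_eq_pow_finrank (K := ZMod 2) (V := LinearMap.ker f)
    simpa using this
  rw [← h4, ← h5]
  exact Fintype.card_congr (Equiv.subtypeEquivRight fun x => (LinearMap.mem_ker).symm)

private def sumL (n : ℕ) : (Fin n → ZMod 2) →ₗ[ZMod 2] ZMod 2 where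
  toFun z := ∑ i, z i
  map_add' x y := by simp [Finset.sum_add_distrib]
  map_smul' c x := by simp [Finset.mul_sum]

private def pairL {n : ℕ} (v : Fin n → ZMod 2) :
    (Fin n → ZMod 2) →ₗ[ZMod 2] ZMod 2 × ZMod 2 where
  toFun z := (∑ i, z i, z ⬝ᵥ v)
  map_add' x y := by
    simp [Finset.sum_add_distrib, add_dotProduct, Prod.ext_iff]
  map_smul' c x := by
    simp [Finset.mul_sum, smul_dotProduct, Prod.ext_iff, smul_eq_mul]

private lemma card_H {n : ℕ} (hn : 1 ≤ n) :
    Fintype.card {z : Fin n → ZMod 2 // ∑ i, z i = 0} = 2 ^ (n - 1) := by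
  have hs : Function.Surjective (sumL n) := by
    intro a
    rcases zmod2_cases a with rfl | rfl
    · exact ⟨0, by simp [sumL]⟩
    · refine ⟨Pi.single ⟨0, hn⟩ 1, ?_⟩
      simp [sumL]
  have := card_ker_eq (sumL n) hs
  simp only [Module.finrank_self] at this
  rw [← this]
  exact Fintype.card_congr (Equiv.subtypeEquivRight fun x => by simp [sumL])

private lemma card_H2 {n : ℕ} (hn : 2 ≤ n) (v : Fin n → ZMod 2)
    (hv0 : ∃ j, v j = 1) (hv1 : ∃ j, v j = 0) :
    Fintype.card {z : Fin n → ZMod 2 // (∑ i, z i = 0) ∧ z ⬝ᵥ v = 0} = 2 ^ (n - 2) := by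
  obtain ⟨j₀, hj₀⟩ := hv0
  obtain ⟨j₁, hj₁⟩ := hv1
  have hne : j₀ ≠ j₁ := by rintro rfl; rw [hj₀] at hj₁; exact one_ne_zero hj₁
  have ha : pairL v (Pi.single j₁ 1) = (1, 0) := by
    simp [pairL, single_dotProduct, hj₁]
  have hb : pairL v (Pi.single j₀ 1 + Pi.single j₁ 1) = (0, 1) := by
    have : (1 : ZMod 2) + 1 = 0 := by decide
    simp [pairL, single_dotProduct, hj₀, hj₁, Finset.sum_add_distrib, Prod.ext_iff, this]
  have hs : Function.Surjective (pairL v) := by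
    intro p
    refine ⟨p.1 • (Pi.single j₁ 1 : Fin n → ZMod 2) +
      p.2 • ((Pi.single j₀ 1 : Fin n → ZMod 2) + Pi.single j₁ 1), ?_⟩
    rw [map_add, LinearMap.map_smul, LinearMap.map_smul, ha, hb]
    rcases zmod2_cases p.1 with h1 | h1 <;> rcases zmod2_cases p.2 with h2 | h2 <;>
      simp [Prod.ext_iff, h1, h2, smul_eq_mul] <;> rfl
  have := card_ker_eq (pairL v) hs
  have hfr : Module.finrank (ZMod 2) (ZMod 2 × ZMod 2) = 2 := by
    simp [Module.finrank_prod]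
  rw [hfr] at this
  rw [← this]
  exact Fintype.card_congr (Equiv.subtypeEquivRight fun x => by simp [pairL, Prod.ext_iff])

/-- Counting lemma over `𝔽₂`: if `B` is invertible with all columns summing to a
vector `w` of coordinate sum `1`, and `H = {z : Σᵢ zᵢ = 0}`, then the number of
pairs `(z₂, z₃) ∈ H × H` with `z₂ᵀ B⁻¹ z₃ = 0` equals
`2^{k−2}(2^{k−1} − 1) + 2^{k−1}`; the proportion among all pairs is `1/2 + 2^{−k}`. -/
theorem count_pairs_bilinear_zero (k : ℕ) (hk : 2 ≤ k)
    (B : Matrix (Fin k) (Fin k) (ZMod 2)) (hB : IsUnit B.det)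
    (w : Fin k → ZMod 2) (hcol : ∀ i, ∑ j, B i j = w i) (hw : ∑ i, w i = 1) :
    Nat.card {p : (Fin k → ZMod 2) × (Fin k → ZMod 2) //
        (∑ i, p.1 i = 0) ∧ (∑ i, p.2 i = 0) ∧ p.1 ⬝ᵥ (B⁻¹ *ᵥ p.2) = 0}
      = 2 ^ (k - 2) * (2 ^ (k - 1) - 1) + 2 ^ (k - 1) ∧
    ((Nat.card {p : (Fin k → ZMod 2) × (Fin k → ZMod 2) //
        (∑ i, p.1 i = 0) ∧ (∑ i, p.2 i = 0) ∧ p.1 ⬝ᵥ (B⁻¹ *ᵥ p.2) = 0} : ℝ) /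
      ((2 : ℝ) ^ (k - 1)) ^ 2) = 1 / 2 + (2 : ℝ) ^ (-(k : ℤ)) := by
  classical
  have hBinv : B * B⁻¹ = 1 := mul_nonsing_inv B hB
  set P : (Fin k → ZMod 2) × (Fin k → ZMod 2) → Prop := fun p =>
    (∑ i, p.1 i = 0) ∧ (∑ i, p.2 i = 0) ∧ p.1 ⬝ᵥ (B⁻¹ *ᵥ p.2) = 0 with hPdef
  -- the per-z₃ count for nonzero z₃ in H
  have key : ∀ z₃ : Fin k → ZMod 2, ∑ i, z₃ i = 0 → z₃ ≠ 0 →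
      Fintype.card {z₂ : Fin k → ZMod 2 //
        (∑ i, z₂ i = 0) ∧ z₂ ⬝ᵥ (B⁻¹ *ᵥ z₃) = 0} = 2 ^ (k - 2) := by
    intro z₃ hz hz0
    apply card_H2 hk
    · by_contra h
      push_neg at h
      have hv : B⁻¹ *ᵥ z₃ = 0 := funext fun j => by
        rcases zmod2_cases ((B⁻¹ *ᵥ z₃) j) with h0 | h1
        · exact h0
        · exact absurd h1 (h j)
      apply hz0
      have := congrArg (B *ᵥ ·) hv
      simpa [mulVec_mulVec, hBinv] using this
    · by_contra h
      push_neg at h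
      have hv : B⁻¹ *ᵥ z₃ = fun _ => 1 := funext fun j => by
        rcases zmod2_cases ((B⁻¹ *ᵥ z₃) j) with h0 | h1
        · exact absurd h0 (h j)
        · exact h1
      have hz₃ : z₃ = B *ᵥ (fun _ => 1) := by
        have h' := congrArg (B *ᵥ ·) hv
        simp only [mulVec_mulVec, hBinv, one_mulVec] at h'
        exact h'
      have hsum : ∑ i, z₃ i = 1 := by
        rw [hz₃]
        have heq : ∀ i, (B *ᵥ fun _ => (1 : ZMod 2)) i = w i := by
          intro i
          simp [Matrix.mulVec, dotProduct]
          rw [← hcol i]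
        rw [Finset.sum_congr rfl fun i _ => heq i, hw]
      rw [hz] at hsum
      exact one_ne_zero hsum.symm
  -- counting
  have h0mem : (fun _ => (0 : ZMod 2)) = (0 : Fin k → ZMod 2) := rfl
  have hcount : Nat.card {p : (Fin k → ZMod 2) × (Fin k → ZMod 2) // P p}
      = 2 ^ (k - 2) * (2 ^ (k - 1) - 1) + 2 ^ (k - 1) := by
    rw [Nat.card_eq_fintype_card, Fintype.card_subtype]
    have hfib : (univ.filter P).card =
        ∑ z₃ : Fin k → ZMod 2, ((univ.filter P).filter fun p => p.2 = z₃).card :=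
      Finset.card_eq_sum_card_fiberwise (f := Prod.snd) fun x _ => mem_univ _
    rw [hfib]
    have hinner : ∀ z₃ : Fin k → ZMod 2,
        ((univ.filter P).filter fun p => p.2 = z₃).card =
        (univ.filter fun z₂ => P (z₂, z₃)).card := by
      intro z₃
      apply Finset.card_nbij' Prod.fst (fun z₂ => (z₂, z₃))
      · intro p hp
        simp only [mem_coe, mem_filter, mem_univ, true_and] at hp ⊢
        rcases hp with ⟨hp1, hp2⟩
        rw [← hp2]
        exact hp1
      · intro z₂ hz₂
        simp only [mem_coe, mem_filter, mem_univ, true_and] at hz₂ ⊢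
        exact ⟨hz₂, trivial⟩
      · intro p hp
        simp only [mem_coe, mem_filter, mem_univ, true_and] at hp
        exact Prod.ext rfl hp.2.symm
      · intro z₂ _
        rfl
    simp only [hinner]
    -- restrict the sum to H
    set Hf : Finset (Fin k → ZMod 2) := univ.filter (fun z => ∑ i, z i = 0) with hHf
    have hHcard : Hf.card = 2 ^ (k - 1) := by
      rw [hHf, ← Fintype.card_subtype]
      exact card_H (le_trans one_le_two hk)
    have hvanish : ∀ z₃ : Fin k → ZMod 2, z₃ ∉ Hf →
        (univ.filter fun z₂ => P (z₂, z₃)).card = 0 := by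
      intro z₃ hz₃
      rw [hHf] at hz₃
      simp only [mem_filter, mem_univ, true_and] at hz₃
      rw [Finset.card_eq_zero, Finset.filter_eq_empty_iff]
      intro z₂ _
      simp only [hPdef]
      tauto
    have hres : ∑ z₃ : Fin k → ZMod 2, (univ.filter fun z₂ => P (z₂, z₃)).card
        = ∑ z₃ ∈ Hf, (univ.filter fun z₂ => P (z₂, z₃)).card :=
      (Finset.sum_subset (Finset.subset_univ Hf) fun x _ hx => hvanish x hx).symm
    rw [hres]
    have h0Hf : (0 : Fin k → ZMod 2) ∈ Hf := by simp [hHf]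
    rw [← Finset.add_sum_erase _ _ h0Hf]
    have hg0 : (univ.filter fun z₂ => P (z₂, (0 : Fin k → ZMod 2))).card = 2 ^ (k - 1) := by
      rw [← Fintype.card_subtype]
      rw [← card_H (n := k) (le_trans one_le_two hk)]
      apply Fintype.card_congr
      apply Equiv.subtypeEquivRight
      intro z₂
      simp [hPdef]
    have hgz : ∀ z₃ ∈ Hf.erase 0,
        (univ.filter fun z₂ => P (z₂, z₃)).card = 2 ^ (k - 2) := by
      intro z₃ hz₃
      rw [Finset.mem_erase, hHf] at hz₃
      simp only [mem_filter, mem_univ, true_and] at hz₃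
      rw [← Fintype.card_subtype, ← key z₃ hz₃.2 hz₃.1]
      apply Fintype.card_congr
      apply Equiv.subtypeEquivRight
      intro z₂
      simp [hPdef, hz₃.2]
    rw [Finset.sum_congr rfl hgz, Finset.sum_const, Finset.card_erase_of_mem h0Hf,
      hHcard, hg0, smul_eq_mul, mul_comm, Nat.add_comm]
  refine ⟨hcount, ?_⟩
  rw [hcount]
  obtain ⟨m, rfl⟩ : ∃ m, k = m + 2 := ⟨k - 2, by omega⟩
  have e1 : m + 2 - 1 = m + 1 := rfl
  have e2 : m + 2 - 2 = m := rfl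
  rw [e1, e2]
  have hle : 1 ≤ 2 ^ (m + 1) := Nat.one_le_two_pow
  have hcast : ((2 ^ m * (2 ^ (m + 1) - 1) + 2 ^ (m + 1) : ℕ) : ℝ)
      = 2 ^ m * (2 ^ (m + 1) - 1) + 2 ^ (m + 1) := by
    push_cast [Nat.cast_sub hle]
    ring
  rw [hcast]
  have hzpow : (2 : ℝ) ^ (-((m + 2 : ℕ) : ℤ)) = ((2 : ℝ) ^ (m + 2))⁻¹ := by
    rw [_root_.zpow_neg, zpow_natCast]
  rw [hzpow]
  have h2 : (2 : ℝ) ^ (m + 1) ≠ 0 := by positivity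
  have h3 : (2 : ℝ) ^ (m + 2) ≠ 0 := by positivity
  field_simp
  ring
end

section
/- Let n ≡ 7 (mod 24) be square-free with prime factors ℓ₁,…,ℓ_k, and let A, z_d, D_d be the associated 𝔽₂-data. Then det([[A + D_{-1}, z_{-3}],[z₂ᵀ, 1]]) = det([[z_{-1}z_{-2}ᵀ + z₂z_{-1}ᵀ, Aᵀ + D_{-1}],[A + D_{-1}, D_{-3}]]) in 𝔽₂. -/
open Matrix

/-! ### Auxiliary facts about `ZMod 2` and the sign map `x ↦ (-1)^x.val` -/

lemma zmod2_add_self (x : ZMod 2) : x + x = 0 := by revert x; decide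
lemma zmod2_mul_self (x : ZMod 2) : x * x = x := by revert x; decide
lemma zmod2_sub_eq_add (x y : ZMod 2) : x - y = x + y := by revert x y; decide
lemma zmod2_sq_eq_one (x : ZMod 2) (h : x * x = 1) : x = 1 := by revert x; decide
lemma zmod2_val_mul (x y : ZMod 2) : (x * y).val = x.val * y.val := by revert x y; decide
lemma eps_add (x y : ZMod 2) : (-1:ℤ) ^ (x + y).val = (-1:ℤ) ^ x.val * (-1:ℤ) ^ y.val := by
  revert x y; decide
lemma eps_inj (x y : ZMod 2) (h : (-1:ℤ) ^ x.val = (-1:ℤ) ^ y.val) : x = y := by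
  revert x y; decide
lemma eps_eq_zero (x : ZMod 2) (h : (-1:ℤ) ^ x.val = 1) : x = 0 := by revert x; decide
lemma eps_eq_one (x : ZMod 2) (h : (-1:ℤ) ^ x.val = -1) : x = 1 := by revert x; decide

lemma eps_sum {ι : Type*} (s : Finset ι) (f : ι → ZMod 2) :
    (-1:ℤ) ^ (∑ i ∈ s, f i).val = ∏ i ∈ s, (-1:ℤ) ^ (f i).val := by
  induction s using Finset.cons_induction with
  | empty => simp
  | cons a s ha ih => rw [Finset.sum_cons, Finset.prod_cons, eps_add, ih]

lemma eps_addLeg {p : ℕ} [Fact p.Prime] {d : ℤ} (hd : (d : ZMod p) ≠ 0) :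
    (-1 : ℤ) ^ (addLeg d p).val = legendreSym p d := by
  unfold addLeg
  by_cases h : IsSquare ((d : ZMod p))
  · rw [if_pos h, ((legendreSym.eq_one_iff p hd).2 h)]; rfl
  · rw [if_neg h, (legendreSym.eq_neg_one_iff p).2 h]; rfl

lemma prod_legendre {ι : Type*} (p : ℕ) [Fact p.Prime] (s : Finset ι) (f : ι → ℤ) :
    ∏ i ∈ s, legendreSym p (f i) = legendreSym p (∏ i ∈ s, f i) := by
  induction s using Finset.cons_induction with
  | empty => simp [legendreSym.at_one]
  | cons a s ha ih => rw [Finset.prod_cons, Finset.prod_cons, legendreSym.mul, ih]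

/-! ### Nonvanishing of various casts -/

lemma neg_one_ne {p : ℕ} [Fact p.Prime] : ((-1 : ℤ) : ZMod p) ≠ 0 := by
  intro h
  rw [Int.cast_neg, Int.cast_one, neg_eq_zero] at h
  exact one_ne_zero h

lemma two_ne {p : ℕ} [Fact p.Prime] (hp : p ≠ 2) : ((2 : ℤ) : ZMod p) ≠ 0 := by
  rw [Ne, ZMod.intCast_zmod_eq_zero_iff_dvd]
  intro h
  have h2 : p ∣ 2 := by exact_mod_cast h
  exact hp ((Nat.prime_dvd_prime_iff_eq Fact.out Nat.prime_two).mp h2)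

lemma neg_two_ne {p : ℕ} [Fact p.Prime] (hp : p ≠ 2) : ((-2 : ℤ) : ZMod p) ≠ 0 := by
  rw [Ne, ZMod.intCast_zmod_eq_zero_iff_dvd, dvd_neg]
  intro h
  have h2 : p ∣ 2 := by exact_mod_cast h
  exact hp ((Nat.prime_dvd_prime_iff_eq Fact.out Nat.prime_two).mp h2)

lemma neg_three_ne {p : ℕ} [Fact p.Prime] (hp : p ≠ 3) : ((-3 : ℤ) : ZMod p) ≠ 0 := by
  rw [Ne, ZMod.intCast_zmod_eq_zero_iff_dvd, dvd_neg]
  intro h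
  have h2 : p ∣ 3 := by exact_mod_cast h
  exact hp ((Nat.prime_dvd_prime_iff_eq Fact.out (by norm_num)).mp h2)

lemma nat_cast_ne {p q : ℕ} [Fact p.Prime] [Fact q.Prime] (hpq : q ≠ p) :
    (((q : ℤ)) : ZMod p) ≠ 0 := by
  have := ZMod.prime_ne_zero p q hpq.symm
  intro h
  apply this
  rwa [Int.cast_natCast] at h

/-- For a prime `p ∉ {2,3}`, `(-3/p) = (p/3)`. -/
lemma legendre_neg_three {p : ℕ} [Fact p.Prime] (hp2 : p ≠ 2) (hp3 : p ≠ 3) :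
    legendreSym p (-3) = legendreSym 3 (p : ℤ) := by
  haveI : Fact (Nat.Prime 3) := ⟨by norm_num⟩
  have hodd : p % 2 = 1 := (Nat.Prime.eq_two_or_odd Fact.out).resolve_left hp2
  set c : ℤ := (-1) ^ (p / 2) with hc
  set x : ℤ := legendreSym p 3 with hx
  set y : ℤ := legendreSym 3 (p : ℤ) with hy
  have e1 : legendreSym p (-3) = c * x := by
    rw [show (-3:ℤ) = -1 * 3 by norm_num, legendreSym.mul, legendreSym.at_neg_one hp2,
      ZMod.χ₄_eq_neg_one_pow hodd]
  have e2 : y * x = c := by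
    have := legendreSym.quadratic_reciprocity (p := p) (q := 3) hp2 (by norm_num) hp3
    simpa using this
  have e4 : y * y = 1 := by
    have := legendreSym.sq_one (p := 3) (a := (p : ℤ)) (nat_cast_ne hp3)
    rwa [pow_two] at this
  have hc2 : c * c = 1 := by
    rw [hc, ← pow_add]
    exact Even.neg_one_pow ⟨p / 2, rfl⟩
  rw [e1]
  linear_combination (c * y) * e2 + (-(c * x)) * e4 + y * hc2

/-! ### The core determinant identity over `𝔽₂` -/

lemma core_det (k : ℕ) (M : Matrix (Fin k) (Fin k) (ZMod 2)) (u v w : Fin k → ZMod 2)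
    (hcol : ∀ j, ∑ i, M i j = u j)
    (hw : ∑ i, w i = 0) :
    (fromBlocks (vecMulVec u (u + v) + vecMulVec v u) Mᵀ M (diagonal w)).det
      = (M + vecMulVec w v).det := by
  classical
  have h2 : (2 : ZMod 2) = 0 := rfl
  set E : Matrix (Fin k) (Fin k) (ZMod 2) := M + vecMulVec w v with hE
  have hEcol : ∀ j, ∑ i, E i j = u j := by
    intro j
    simp only [hE, Matrix.add_apply, vecMulVec_apply, Finset.sum_add_distrib, hcol,
      ← Finset.sum_mul, hw, zero_mul, add_zero]
  set B : Matrix (Fin k) (Fin k) (ZMod 2) := vecMulVec u (u + v) + vecMulVec v u with hB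
  set P : Matrix (Fin k) (Fin k) (ZMod 2) := Mᵀ + vecMulVec (u + v) w with hP
  set C : Matrix (Fin k) (Fin k) (ZMod 2) := vecMulVec (fun _ => 1) v with hC
  set R : Matrix (Fin k) (Fin k) (ZMod 2) := vecMulVec (u + v) (fun _ => 1) with hR
  set W : Matrix (Fin k) (Fin k) (ZMod 2) := vecMulVec w (fun _ => 1) with hW
  set T1 : Matrix (Fin k ⊕ Fin k) (Fin k ⊕ Fin k) (ZMod 2) := fromBlocks 1 0 C 1 with hT1
  set T2 : Matrix (Fin k ⊕ Fin k) (Fin k ⊕ Fin k) (ZMod 2) := fromBlocks 1 R 0 1 with hT2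
  set J : Matrix (Fin k ⊕ Fin k) (Fin k ⊕ Fin k) (ZMod 2) := fromBlocks 0 1 1 0 with hJ
  have blk11 : B * 1 + Mᵀ * C = vecMulVec (u + v) u := by
    have hMC : Mᵀ * C = vecMulVec u v := by
      ext i j
      simp only [mul_apply, transpose_apply, hC, vecMulVec_apply, one_mul,
        ← Finset.sum_mul, hcol]
    rw [Matrix.mul_one, hMC]
    ext i j
    simp only [hB, Matrix.add_apply, vecMulVec_apply, Pi.add_apply]
    linear_combination (u i * v j) * h2
  have blk21 : M * 1 + diagonal w * C = E := by
    rw [Matrix.mul_one]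
    ext i j
    simp only [Matrix.add_apply, diagonal_mul, hC, vecMulVec_apply, one_mul, hE]
  have step1 : fromBlocks B Mᵀ M (diagonal w) * T1
      = fromBlocks (vecMulVec (u + v) u) Mᵀ E (diagonal w) := by
    rw [hT1, fromBlocks_multiply, blk11, blk21, Matrix.mul_zero, Matrix.mul_zero,
      Matrix.mul_one, Matrix.mul_one, zero_add, zero_add]
  have blk11' : 1 * vecMulVec (u + v) u + R * E = 0 := by
    have hRE : R * E = vecMulVec (u + v) u := by
      ext i j
      simp only [mul_apply, hR, vecMulVec_apply, mul_one, ← Finset.mul_sum, hEcol]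
    rw [Matrix.one_mul, hRE]
    ext i j
    simp only [Matrix.add_apply, Matrix.zero_apply]
    exact zmod2_add_self _
  have blk12' : 1 * Mᵀ + R * diagonal w = P := by
    rw [Matrix.one_mul, hP]
    congr 1
    ext i j
    simp only [mul_diagonal, hR, vecMulVec_apply, mul_one]
  have step2 : T2 * fromBlocks (vecMulVec (u + v) u) Mᵀ E (diagonal w)
      = fromBlocks 0 P E (diagonal w) := by
    rw [hT2, fromBlocks_multiply, blk11', blk12', Matrix.zero_mul, Matrix.zero_mul,
      Matrix.one_mul, Matrix.one_mul, zero_add, zero_add]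
  have step3 : fromBlocks (0 : Matrix (Fin k) (Fin k) (ZMod 2)) P E (diagonal w) * J
      = fromBlocks P 0 (diagonal w) E := by
    rw [hJ, fromBlocks_multiply]
    simp
  have hdetT1 : T1.det = 1 := by
    rw [hT1, det_fromBlocks_zero₁₂]; simp
  have hdetT2 : T2.det = 1 := by
    rw [hT2, det_fromBlocks_zero₂₁]; simp
  have hdetJ : J.det = 1 := by
    have hJJ : J * J = 1 := by
      rw [hJ, fromBlocks_multiply]
      simp [← fromBlocks_one]
    have := congrArg Matrix.det hJJ
    rw [det_mul, det_one] at this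
    exact zmod2_sq_eq_one _ this
  have key : (fromBlocks B Mᵀ M (diagonal w)).det = P.det * E.det := by
    calc (fromBlocks B Mᵀ M (diagonal w)).det
        = T2.det * ((fromBlocks B Mᵀ M (diagonal w)).det * T1.det) * J.det := by
          rw [hdetT1, hdetT2, hdetJ]; ring
      _ = (T2 * (fromBlocks B Mᵀ M (diagonal w) * T1) * J).det := by
          rw [det_mul, det_mul, det_mul]
      _ = (fromBlocks P 0 (diagonal w) E).det := by rw [step1, step2, step3]
      _ = P.det * E.det := by rw [det_fromBlocks_zero₁₂]
  have hWE : W * E = vecMulVec w u := by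
    ext i j
    simp only [mul_apply, hW, vecMulVec_apply, mul_one, ← Finset.mul_sum, hEcol]
  have hPt : Pᵀ = (1 + W) * E := by
    rw [add_mul, Matrix.one_mul, hWE]
    ext i j
    simp only [hP, transpose_add, transpose_transpose, transpose_apply, Matrix.add_apply,
      vecMulVec_apply, Pi.add_apply, hE]
    ring
  have hfac : det (1 + W) = 1 := by
    rw [hW, vecMulVec_eq Unit, det_one_add_replicateCol_mul_replicateRow]
    simp only [dotProduct, one_mul, hw, add_zero]
  have hPdet : P.det = E.det := by
    rw [← det_transpose P, hPt, det_mul, hfac, one_mul]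
  rw [key, hPdet, zmod2_mul_self]

/-- For `n ≡ 7 (mod 24)` square-free with prime factors `ℓ₁,…,ℓ_k`,
`det([[A + D_{-1}, z_{-3}],[z₂ᵀ, 1]]) = det([[z_{-1}z_{-2}ᵀ + z₂z_{-1}ᵀ, Aᵀ + D_{-1}],
[A + D_{-1}, D_{-3}]])` in `𝔽₂`. -/
theorem det_identity_mod24_7 (k : ℕ) (ℓ : Fin k → ℕ) (n : ℕ)
    (hprime : ∀ i, (ℓ i).Prime) (hcop : ∀ i, ℓ i ≠ 2 ∧ ℓ i ≠ 3)
    (hinj : Function.Injective ℓ)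
    (hn : n = ∏ i, ℓ i) (hsf : Squarefree n) (hmod : n % 24 = 7) :
    (Matrix.fromBlocks (matA k ℓ + Matrix.diagonal (vecZ k ℓ (-1)))
        (Matrix.replicateCol Unit (vecZ k ℓ (-3)))
        (Matrix.replicateRow Unit (vecZ k ℓ 2)) (1 : Matrix Unit Unit (ZMod 2))).det =
      (Matrix.fromBlocks
        (Matrix.vecMulVec (vecZ k ℓ (-1)) (vecZ k ℓ (-2)) +
          Matrix.vecMulVec (vecZ k ℓ 2) (vecZ k ℓ (-1)))
        ((matA k ℓ)ᵀ + Matrix.diagonal (vecZ k ℓ (-1)))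
        (matA k ℓ + Matrix.diagonal (vecZ k ℓ (-1)))
        (Matrix.diagonal (vecZ k ℓ (-3)))).det := by
  classical
  set u : Fin k → ZMod 2 := vecZ k ℓ (-1) with hu_def
  set v : Fin k → ZMod 2 := vecZ k ℓ 2 with hv_def
  set w : Fin k → ZMod 2 := vecZ k ℓ (-3) with hw_def
  have hua : ∀ i, u i = addLeg (-1) (ℓ i) := fun _ => rfl
  have hva : ∀ i, v i = addLeg 2 (ℓ i) := fun _ => rfl
  have hwa : ∀ i, w i = addLeg (-3) (ℓ i) := fun _ => rfl
  have h4 : n % 4 = 3 := by omega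
  have h8 : n % 8 = 7 := by omega
  have h3 : n % 3 = 1 := by omega
  have hodd : ∀ i, ℓ i % 2 = 1 := fun i =>
    (Nat.Prime.eq_two_or_odd (hprime i)).resolve_left (hcop i).1
  -- entries of z₋₁ sum to 1
  have hu : ∑ i, u i = 1 := by
    apply eps_eq_one
    rw [eps_sum]
    have step : ∀ i ∈ Finset.univ, (-1:ℤ) ^ (u i).val = ZMod.χ₄ (ℓ i) := by
      intro i _
      haveI := Fact.mk (hprime i)
      rw [hua i, eps_addLeg neg_one_ne, legendreSym.at_neg_one (hcop i).1]
    rw [Finset.prod_congr rfl step,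
      ← map_prod ZMod.χ₄ (fun i => ((ℓ i : ZMod 4))) Finset.univ, ← Nat.cast_prod, ← hn]
    exact ZMod.χ₄_nat_three_mod_four h4
  -- entries of z₂ sum to 0
  have hv : ∑ i, v i = 0 := by
    apply eps_eq_zero
    rw [eps_sum]
    have step : ∀ i ∈ Finset.univ, (-1:ℤ) ^ (v i).val = ZMod.χ₈ (ℓ i) := by
      intro i _
      haveI := Fact.mk (hprime i)
      rw [hva i, eps_addLeg (two_ne (hcop i).1), legendreSym.at_two (hcop i).1]
    rw [Finset.prod_congr rfl step,
      ← map_prod ZMod.χ₈ (fun i => ((ℓ i : ZMod 8))) Finset.univ, ← Nat.cast_prod, ← hn]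
    rw [ZMod.χ₈_nat_mod_eight, h8]
    decide
  -- entries of z₋₃ sum to 0
  have hw : ∑ i, w i = 0 := by
    haveI : Fact (Nat.Prime 3) := ⟨by norm_num⟩
    apply eps_eq_zero
    rw [eps_sum]
    have step : ∀ i ∈ Finset.univ, (-1:ℤ) ^ (w i).val = legendreSym 3 ((ℓ i : ℤ)) := by
      intro i _
      haveI := Fact.mk (hprime i)
      rw [hwa i, eps_addLeg (neg_three_ne (hcop i).2),
        legendre_neg_three (hcop i).1 (hcop i).2]
    rw [Finset.prod_congr rfl step, prod_legendre]
    have hcast : (∏ i, ((ℓ i : ℤ))) = (n : ℤ) := by rw [hn]; push_cast; rfl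
    rw [hcast, legendreSym.mod]
    have : ((n : ℤ) % (3:ℕ)) = 1 := by push_cast; omega
    rw [this, legendreSym.at_one]
  -- quadratic reciprocity, additive form
  have hQR : ∀ i j : Fin k, i ≠ j →
      addLeg (ℓ j) (ℓ i) + addLeg (ℓ i) (ℓ j) = u i * u j := by
    intro i j hij
    haveI := Fact.mk (hprime i)
    haveI := Fact.mk (hprime j)
    have hne_ji : ℓ j ≠ ℓ i := fun h => hij (hinj h).symm
    have hne_ij : ℓ i ≠ ℓ j := fun h => hij (hinj h)
    apply eps_inj
    rw [eps_add, eps_addLeg (nat_cast_ne hne_ji), eps_addLeg (nat_cast_ne hne_ij),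
      zmod2_val_mul]
    have hqr := legendreSym.quadratic_reciprocity (p := ℓ j) (q := ℓ i)
      (hcop j).1 (hcop i).1 (fun h => hij (hinj h).symm)
    rw [hqr]
    have hi : (-1:ℤ) ^ (u i).val = (-1:ℤ) ^ (ℓ i / 2) := by
      rw [hua i, eps_addLeg neg_one_ne, legendreSym.at_neg_one (hcop i).1,
        ZMod.χ₄_eq_neg_one_pow (hodd i)]
    have hj : (-1:ℤ) ^ (u j).val = (-1:ℤ) ^ (ℓ j / 2) := by
      rw [hua j, eps_addLeg neg_one_ne, legendreSym.at_neg_one (hcop j).1,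
        ZMod.χ₄_eq_neg_one_pow (hodd j)]
    calc ((-1:ℤ)) ^ (ℓ j / 2 * (ℓ i / 2))
        = ((-1:ℤ) ^ (ℓ j / 2)) ^ (ℓ i / 2) := pow_mul _ _ _
      _ = ((-1:ℤ) ^ (u j).val) ^ (ℓ i / 2) := by rw [hj]
      _ = ((-1:ℤ) ^ (ℓ i / 2)) ^ (u j).val := by
          rw [← pow_mul, mul_comm, pow_mul]
      _ = ((-1:ℤ) ^ (u i).val) ^ (u j).val := by rw [hi]
      _ = (-1:ℤ) ^ ((u i).val * (u j).val) := (pow_mul _ _ _).symm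
  -- multiplicativity: z₋₂ = z₋₁ + z₂
  have hm2 : vecZ k ℓ (-2) = u + v := by
    funext i
    haveI := Fact.mk (hprime i)
    apply eps_inj
    show (-1:ℤ) ^ (addLeg (-2) (ℓ i)).val = (-1:ℤ) ^ (u i + v i).val
    rw [eps_addLeg (neg_two_ne (hcop i).1), eps_add, hua i, hva i,
      eps_addLeg neg_one_ne, eps_addLeg (two_ne (hcop i).1), ← legendreSym.mul]
    norm_num
  -- column sums of A + D₋₁ are z₋₁
  have hcolM : ∀ j, ∑ i, (matA k ℓ + diagonal u) i j = u j := by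
    intro jj
    have hdiag : ∑ i, diagonal u i jj = u jj := by
      simp [Matrix.diagonal_apply, Finset.sum_ite_eq']
    have hA : ∑ i, matA k ℓ i jj = 0 := by
      rw [← Finset.add_sum_erase Finset.univ _ (Finset.mem_univ jj)]
      have h1 : matA k ℓ jj jj = ∑ i ∈ Finset.univ.erase jj, addLeg (ℓ i) (ℓ jj) := by
        simp [matA]
      have h2 : ∀ i ∈ Finset.univ.erase jj, matA k ℓ i jj = addLeg (ℓ jj) (ℓ i) := by
        intro i hi
        have : i ≠ jj := Finset.ne_of_mem_erase hi
        simp [matA, this]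
      rw [h1, Finset.sum_congr rfl h2, ← Finset.sum_add_distrib]
      have h3 : ∀ i ∈ Finset.univ.erase jj,
          addLeg (ℓ i) (ℓ jj) + addLeg (ℓ jj) (ℓ i) = u i * u jj := by
        intro i hi
        have hij : i ≠ jj := Finset.ne_of_mem_erase hi
        rw [hQR jj i hij.symm, mul_comm]
      rw [Finset.sum_congr rfl h3, ← Finset.sum_mul]
      have h5 : ∑ i ∈ Finset.univ.erase jj, u i = 1 + u jj := by
        have h6 := Finset.sum_erase_add Finset.univ u (Finset.mem_univ jj)
        rw [hu] at h6
        have h7 := congrArg (· + u jj) h6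
        rwa [add_assoc, zmod2_add_self, add_zero] at h7
      rw [h5]
      have : (1 + u jj) * u jj = u jj + u jj * u jj := by ring
      rw [this, zmod2_mul_self, zmod2_add_self]
    simp only [Matrix.add_apply, Finset.sum_add_distrib, hA, hdiag, zero_add]
  -- assemble
  rw [det_fromBlocks_one₂₂]
  have hsub : matA k ℓ + diagonal u - replicateCol Unit w * replicateRow Unit v
      = matA k ℓ + diagonal u + vecMulVec w v := by
    rw [← vecMulVec_eq Unit]
    ext i j
    rw [Matrix.sub_apply, Matrix.add_apply (matA k ℓ + diagonal u), zmod2_sub_eq_add]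
  rw [hsub, hm2,
    show (matA k ℓ)ᵀ + diagonal u = (matA k ℓ + diagonal u)ᵀ by
      rw [transpose_add, diagonal_transpose]]
  exact (core_det k (matA k ℓ + diagonal u) u v w hcolM hw).symm
end
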